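/- If the matrix [A a] (an SU matrix whose last column is a) is strongly unimodular, then the matrix [A a a] obtained by repeating the column a is strongly unimodular; likewise, repeating any row of a strongly unimodular matrix yields a strongly unimodular matrix. -/

import Mathlib

open scoped Matrix

private lemma sr_mul {x y : ℚ} (hx : x ∈ Set.range (SignType.cast : SignType → ℚ))
    (hy : y ∈ Set.range (SignType.cast : SignType → ℚ)) :
    x * y ∈ Set.range (SignType.cast : SignType → ℚ) := by
  obtain ⟨s, rfl⟩ := hx; obtain ⟨t, rfl⟩ := hy
  exact ⟨s * t, by push_cast; ring⟩

private lemma sr_neg {x : ℚ} (hx : x ∈ Set.range (SignType.cast : SignType → ℚ)) :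
    -x ∈ Set.range (SignType.cast : SignType → ℚ) := by
  obtain ⟨s, rfl⟩ := hx
  exact ⟨-s, by push_cast; ring⟩

private lemma sr_zero : (0 : ℚ) ∈ Set.range (SignType.cast : SignType → ℚ) := ⟨0, rfl⟩

/-- Core lemma: if column `v` of `M` agrees with column `u` except at row `i₀` where it is `0`,
and both the matrix with column `v` overwritten by column `u` and the matrix with column `u`
overwritten by column `v` are TU, then `M` is TU. -/
private lemma key {m n : Type*} [DecidableEq m] [DecidableEq n] (M : Matrix m n ℚ)
    (u v : n) (i₀ : m)
    (huv : ∀ r, r ≠ i₀ → M r u = M r v) (hv : M i₀ v = 0)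
    (h1 : (M.updateCol v (fun r => M r u)).IsTotallyUnimodular)
    (h2 : (M.updateCol u (fun r => M r v)).IsTotallyUnimodular) :
    M.IsTotallyUnimodular := by
  rcases eq_or_ne u v with rfl | huvne
  · rwa [Matrix.updateCol_eq_self] at h1
  rw [Matrix.isTotallyUnimodular_iff]
  intro k f g
  by_cases hfg : f.Injective ∧ g.Injective
  swap
  · refine ⟨0, ?_⟩
    rw [SignType.coe_zero, eq_comm]
    simp_rw [not_and_or, Function.not_injective_iff] at hfg
    obtain ⟨i, j, hfij, hij⟩ | ⟨i, j, hgij, hij⟩ := hfg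
    · rw [← Matrix.det_transpose, Matrix.transpose_submatrix]
      apply Matrix.det_zero_of_column_eq hij.symm
      simp [hfij]
    · apply Matrix.det_zero_of_column_eq hij
      simp [hgij]
  obtain ⟨hf, hg⟩ := hfg
  by_cases hvg : ∃ q, g q = v
  swap
  · have he : M.submatrix f g = (M.updateCol v (fun r => M r u)).submatrix f g := by
      ext i j
      simp only [Matrix.submatrix_apply, Matrix.updateCol_apply]
      rw [if_neg (fun h => hvg ⟨j, h⟩)]
    rw [he]
    exact (Matrix.isTotallyUnimodular_iff _).mp h1 k f g
  obtain ⟨q, hq⟩ := hvg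
  by_cases hug : ∃ p, g p = u
  swap
  · have he : M.submatrix f g = (M.updateCol u (fun r => M r v)).submatrix f g := by
      ext i j
      simp only [Matrix.submatrix_apply, Matrix.updateCol_apply]
      rw [if_neg (fun h => hug ⟨j, h⟩)]
    rw [he]
    exact (Matrix.isTotallyUnimodular_iff _).mp h2 k f g
  obtain ⟨p, hp⟩ := hug
  have hpq : p ≠ q := by rintro rfl; exact huvne (hp ▸ hq)
  by_cases hif : ∃ r₀, f r₀ = i₀
  swap
  · refine ⟨0, ?_⟩
    rw [SignType.coe_zero, eq_comm]
    apply Matrix.det_zero_of_column_eq hpq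
    intro r
    simp only [Matrix.submatrix_apply, hp, hq]
    exact huv (f r) (fun h => hif ⟨r, h⟩)
  obtain ⟨r₀, hr₀⟩ := hif
  obtain ⟨k', rfl⟩ : ∃ k', k = k' + 1 := by
    cases k with
    | zero => exact r₀.elim0
    | succ k => exact ⟨k, rfl⟩
  set S := M.submatrix f g with hSdef
  have hS : S = S.updateCol q ((fun r => M (f r) u) +
      (-(M i₀ u)) • (Pi.single r₀ 1 : Fin (k' + 1) → ℚ)) := by
    ext i j
    rw [Matrix.updateCol_apply]
    split_ifs with hj
    · subst hj
      rcases eq_or_ne i r₀ with rfl | hir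
      · simp [hSdef, hq, hr₀, hv]
      · have : f i ≠ i₀ := fun h => hir (hf (h.trans hr₀.symm))
        simp [hSdef, hq, huv (f i) this, Pi.single_eq_of_ne hir]
    · rfl
  have hz : (S.updateCol q fun r => M (f r) u).det = 0 := by
    apply Matrix.det_zero_of_column_eq hpq
    intro r
    rw [Matrix.updateCol_apply, Matrix.updateCol_apply, if_neg hpq, if_pos rfl]
    simp [hSdef, hp]
  have hdet : S.det = (-(M i₀ u)) *
      (S.updateCol q (Pi.single r₀ 1 : Fin (k' + 1) → ℚ)).det := by
    conv_lhs => rw [hS]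
    rw [Matrix.det_updateCol_add, Matrix.det_updateCol_smul, hz, zero_add]
  rw [hdet]
  have hMu : M i₀ u ∈ Set.range (SignType.cast : SignType → ℚ) := by
    have := h1.apply i₀ u
    rwa [Matrix.updateCol_apply, if_neg huvne] at this
  refine sr_mul (sr_neg hMu) ?_
  -- now show det of T := S.updateCol q (single r₀ 1) is in range
  set T := S.updateCol q (Pi.single r₀ 1 : Fin (k' + 1) → ℚ) with hTdef
  set e₁ := Equiv.swap (0 : Fin (k' + 1)) r₀ with he₁
  set e₂ := Equiv.swap (0 : Fin (k' + 1)) q with he₂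
  have hperm : ((T.submatrix e₁ id).submatrix id e₂).det
      = (Equiv.Perm.sign e₂ : ℚ) * ((Equiv.Perm.sign e₁ : ℚ) * T.det) := by
    rw [Matrix.det_permute', Matrix.det_permute]
  have hTT : T.det ∈ Set.range (SignType.cast : SignType → ℚ) ↔
      ((T.submatrix e₁ id).submatrix id e₂).det ∈ Set.range (SignType.cast : SignType → ℚ) := by
    rw [hperm]
    rcases Int.units_eq_one_or (Equiv.Perm.sign e₁) with h | h <;>
      rcases Int.units_eq_one_or (Equiv.Perm.sign e₂) with h' | h' <;>
        rw [h, h'] <;> push_cast <;>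
          simp only [one_mul, neg_mul, neg_neg, mul_neg] <;>
            constructor <;> intro hh <;> first | exact hh | exact sr_neg hh |
              simpa using sr_neg hh
  rw [hTT]
  set T' := (T.submatrix e₁ id).submatrix id e₂ with hT'def
  have hcol0 : ∀ i, T' i 0 = if i = 0 then 1 else 0 := by
    intro i
    have : T' i 0 = T (e₁ i) q := by
      simp [hT'def, he₂, Equiv.swap_apply_left]
    rw [this, hTdef, Matrix.updateCol_apply, if_pos rfl]
    have h0 : e₁ 0 = r₀ := by rw [he₁]; exact Equiv.swap_apply_left _ _
    rcases eq_or_ne i 0 with rfl | hi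
    · rw [h0, Pi.single_eq_same, if_pos rfl]
    · have hne : e₁ i ≠ r₀ := fun h => hi (e₁.injective (h.trans h0.symm))
      rw [if_neg hi, Pi.single_eq_of_ne hne]
  rw [Matrix.det_succ_column_zero]
  rw [Fintype.sum_eq_single (0 : Fin (k' + 1)) (fun i hi => by rw [hcol0 i, if_neg hi]; ring)]
  rw [hcol0 0, if_pos rfl]
  simp only [Fin.val_zero, pow_zero, one_mul, mul_one, Fin.succAbove_zero]
  have hmin : T'.submatrix Fin.succ Fin.succ =
      (M.updateCol v (fun r => M r u)).submatrix (fun i => f (e₁ i.succ))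
        (fun j => g (e₂ j.succ)) := by
    ext i j
    have h2q : e₂ j.succ ≠ q := by
      intro h
      have : j.succ = (0 : Fin (k' + 1)) := by
        have := e₂.injective (h.trans (Equiv.swap_apply_left (0 : Fin (k'+1)) q).symm)
        simpa using this
      exact Fin.succ_ne_zero j this
    have hgv : g (e₂ j.succ) ≠ v := fun h => h2q (hg (h.trans hq.symm))
    simp only [Matrix.submatrix_apply, hT'def, hTdef, Matrix.updateCol_apply,
      if_neg h2q, if_neg hgv, hSdef, id]
  rw [hmin]
  exact (Matrix.isTotallyUnimodular_iff _).mp h1 (k') _ _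

/-- A matrix is strongly unimodular if it is totally unimodular and remains totally
unimodular after replacing any single nonzero entry by `0`. -/
def IsStronglyUnimodular {m n : Type*} [DecidableEq m] [DecidableEq n]
    (A : Matrix m n ℚ) : Prop :=
  A.IsTotallyUnimodular ∧
    ∀ i j, A i j ≠ 0 → (A.updateRow i (Function.update (A i) j 0)).IsTotallyUnimodular
private lemma update_transpose {m n : Type*} [DecidableEq m] [DecidableEq n]
    (A : Matrix m n ℚ) (i : m) (j : n) :
    Aᵀ.updateRow j (Function.update (Aᵀ j) i 0) =
      (A.updateRow i (Function.update (A i) j 0))ᵀ := by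
  ext x y
  by_cases hx : x = j <;> by_cases hy : y = i <;>
    simp [Matrix.updateRow_apply, Function.update_apply, hx, hy]

private lemma su_transpose {m n : Type*} [DecidableEq m] [DecidableEq n] {A : Matrix m n ℚ}
    (hA : IsStronglyUnimodular A) : IsStronglyUnimodular Aᵀ := by
  refine ⟨hA.1.transpose, fun j i hji => ?_⟩
  rw [update_transpose]
  exact (hA.2 i j hji).transpose

/-- Repeating the last column of a strongly unimodular matrix [A a] yields a strongly
unimodular matrix [A a a]; likewise, repeating any row of a strongly unimodular matrix
yields a strongly unimodular matrix. -/
theorem isStronglyUnimodular_repeat_col_row {m n : Type*} [DecidableEq m] [DecidableEq n]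
    (A : Matrix m n ℚ) :
    (∀ a : m → ℚ,
      IsStronglyUnimodular (Matrix.fromCols A (Matrix.of fun i (_ : Unit) => a i)) →
      IsStronglyUnimodular (Matrix.fromCols
        (Matrix.fromCols A (Matrix.of fun i (_ : Unit) => a i))
        (Matrix.of fun i (_ : Unit) => a i))) ∧
    (IsStronglyUnimodular A → ∀ i₀ : m,
      IsStronglyUnimodular (Matrix.fromRows A (Matrix.of fun (_ : Unit) j => A i₀ j))) := by
  constructor
  · intro a hSU
    set B := Matrix.fromCols A (Matrix.of fun i (_ : Unit) => a i) with hB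
    set T := Matrix.fromCols B (Matrix.of fun i (_ : Unit) => a i) with hT
    have hTsub : T = B.submatrix id (Sum.elim id fun _ => Sum.inr ()) := by
      ext r z
      rcases z with z | _ <;> rfl
    refine ⟨hTsub ▸ hSU.1.submatrix _ _, ?_⟩
    intro i j hij
    rcases j with j | _
    · rcases j with j₀ | _
      · -- zeroing an entry of the `A` part
        have hne : B i (Sum.inl j₀) ≠ 0 := hij
        have heq : T.updateRow i (Function.update (T i) (Sum.inl (Sum.inl j₀)) 0) =
            (B.updateRow i (Function.update (B i) (Sum.inl j₀) 0)).submatrix id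
              (Sum.elim id fun _ => Sum.inr ()) := by
          ext r z
          rcases z with (z | _) | _ <;> by_cases hr : r = i <;>
            simp [Matrix.updateRow_apply, Function.update_apply, hr, hT, hB]
        exact heq ▸ (hSU.2 i (Sum.inl j₀) hne).submatrix id _
      · -- zeroing the middle `a` column
        apply key _ (Sum.inr ()) (Sum.inl (Sum.inr ())) i
        · intro r hr
          simp [Matrix.updateRow_apply, Function.update_apply, hr, hT, hB]
        · simp [Matrix.updateRow_apply, Function.update_apply]
        · have heq : (T.updateRow i (Function.update (T i) (Sum.inl (Sum.inr ())) 0)).updateCol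
              (Sum.inl (Sum.inr ())) (fun r =>
                T.updateRow i (Function.update (T i) (Sum.inl (Sum.inr ())) 0) r (Sum.inr ())) =
              T := by
            ext r z
            rcases z with (z | _) | _ <;> by_cases hr : r = i <;>
              simp [Matrix.updateRow_apply, Matrix.updateCol_apply, Function.update_apply,
                hr, hT, hB]
          rw [heq, hTsub]
          exact hSU.1.submatrix _ _
        · have hne : B i (Sum.inr ()) ≠ 0 := hij
          have heq : (T.updateRow i (Function.update (T i) (Sum.inl (Sum.inr ())) 0)).updateCol
              (Sum.inr ()) (fun r =>
                T.updateRow i (Function.update (T i) (Sum.inl (Sum.inr ())) 0) r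
                  (Sum.inl (Sum.inr ()))) =
              (B.updateRow i (Function.update (B i) (Sum.inr ()) 0)).submatrix id
                (Sum.elim id fun _ => Sum.inr ()) := by
            ext r z
            rcases z with (z | _) | _ <;> by_cases hr : r = i <;>
              simp [Matrix.updateRow_apply, Matrix.updateCol_apply, Function.update_apply,
                hr, hT, hB]
          rw [heq]
          exact (hSU.2 i (Sum.inr ()) hne).submatrix id _
    · -- zeroing the last `a` column
      apply key _ (Sum.inl (Sum.inr ())) (Sum.inr ()) i
      · intro r hr
        simp [Matrix.updateRow_apply, Function.update_apply, hr, hT, hB]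
      · simp [Matrix.updateRow_apply, Function.update_apply]
      · have heq : (T.updateRow i (Function.update (T i) (Sum.inr ()) 0)).updateCol
            (Sum.inr ()) (fun r =>
              T.updateRow i (Function.update (T i) (Sum.inr ()) 0) r (Sum.inl (Sum.inr ()))) =
            T := by
          ext r z
          rcases z with (z | _) | _ <;> by_cases hr : r = i <;>
            simp [Matrix.updateRow_apply, Matrix.updateCol_apply, Function.update_apply,
              hr, hT, hB]
        rw [heq, hTsub]
        exact hSU.1.submatrix _ _
      · have hne : B i (Sum.inr ()) ≠ 0 := hij
        have heq : (T.updateRow i (Function.update (T i) (Sum.inr ()) 0)).updateCol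
            (Sum.inl (Sum.inr ())) (fun r =>
              T.updateRow i (Function.update (T i) (Sum.inr ()) 0) r (Sum.inr ())) =
            (B.updateRow i (Function.update (B i) (Sum.inr ()) 0)).submatrix id
              (Sum.elim id fun _ => Sum.inr ()) := by
          ext r z
          rcases z with (z | _) | _ <;> by_cases hr : r = i <;>
            simp [Matrix.updateRow_apply, Matrix.updateCol_apply, Function.update_apply,
              hr, hT, hB]
        rw [heq]
        exact (hSU.2 i (Sum.inr ()) hne).submatrix id _
  · intro hSU i₀
    set R := Matrix.fromRows A (Matrix.of fun (_ : Unit) j => A i₀ j) with hR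
    have hsub : Rᵀ = Aᵀ.submatrix id (Sum.elim id fun _ => i₀) := by
      ext y z
      rcases z with z | _ <;> rfl
    have hsu : IsStronglyUnimodular Rᵀ := by
      refine ⟨hsub ▸ hSU.1.transpose.submatrix id _, ?_⟩
      intro y z hz
      rcases z with i | _
      · by_cases hii : i = i₀
        · subst hii
          apply key _ (Sum.inr ()) (Sum.inl i) y
          · intro r hr
            simp [Matrix.updateRow_apply, Function.update_apply, hr, hR]
          · simp [Matrix.updateRow_apply, Function.update_apply]
          · have heq : (Rᵀ.updateRow y (Function.update (Rᵀ y) (Sum.inl i) 0)).updateCol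
                (Sum.inl i) (fun r =>
                  Rᵀ.updateRow y (Function.update (Rᵀ y) (Sum.inl i) 0) r (Sum.inr ())) =
                Rᵀ := by
              ext x z
              rcases z with z | _
              · by_cases hx : x = y <;> by_cases hzz : z = i <;>
                  simp [Matrix.updateRow_apply, Matrix.updateCol_apply, Function.update_apply, hx, hzz, hR]
              · by_cases hx : x = y <;>
                  simp [Matrix.updateRow_apply, Matrix.updateCol_apply, Function.update_apply, hx, hR]
            rw [heq, hsub]
            exact hSU.1.transpose.submatrix id _
          · have hne : A i y ≠ 0 := hz
            have heq : (Rᵀ.updateRow y (Function.update (Rᵀ y) (Sum.inl i) 0)).updateCol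
                (Sum.inr ()) (fun r =>
                  Rᵀ.updateRow y (Function.update (Rᵀ y) (Sum.inl i) 0) r (Sum.inl i)) =
                ((A.updateRow i (Function.update (A i) y 0))ᵀ).submatrix id
                  (Sum.elim id fun _ => i) := by
              ext x z
              rcases z with z | _
              · by_cases hx : x = y <;> by_cases hzz : z = i <;>
                  simp [Matrix.updateRow_apply, Matrix.updateCol_apply, Function.update_apply, hx, hzz, hR]
              · by_cases hx : x = y <;>
                  simp [Matrix.updateRow_apply, Matrix.updateCol_apply, Function.update_apply, hx, hR]
            rw [heq]
            exact (hSU.2 i y hne).transpose.submatrix id _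
        · have hne : A i y ≠ 0 := hz
          have heq : Rᵀ.updateRow y (Function.update (Rᵀ y) (Sum.inl i) 0) =
              ((A.updateRow i (Function.update (A i) y 0))ᵀ).submatrix id
                (Sum.elim id fun _ => i₀) := by
            ext x z
            rcases z with z | _
            · by_cases hx : x = y <;> by_cases hzz : z = i <;>
                simp [Matrix.updateRow_apply, Function.update_apply, hx, hzz, hR, hii, Ne.symm hii]
            · by_cases hx : x = y <;>
                simp [Matrix.updateRow_apply, Function.update_apply, hx, hR, hii, Ne.symm hii]
          rw [heq]
          exact (hSU.2 i y hne).transpose.submatrix id _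
      · apply key _ (Sum.inl i₀) (Sum.inr ()) y
        · intro r hr
          simp [Matrix.updateRow_apply, Function.update_apply, hr, hR]
        · simp [Matrix.updateRow_apply, Function.update_apply]
        · have heq : (Rᵀ.updateRow y (Function.update (Rᵀ y) (Sum.inr ()) 0)).updateCol
              (Sum.inr ()) (fun r =>
                Rᵀ.updateRow y (Function.update (Rᵀ y) (Sum.inr ()) 0) r (Sum.inl i₀)) =
              Rᵀ := by
            ext x z
            rcases z with z | _ <;> by_cases hx : x = y <;>
              simp [Matrix.updateRow_apply, Matrix.updateCol_apply, Function.update_apply,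
                hx, hR]
          rw [heq, hsub]
          exact hSU.1.transpose.submatrix id _
        · have hne : A i₀ y ≠ 0 := hz
          have heq : (Rᵀ.updateRow y (Function.update (Rᵀ y) (Sum.inr ()) 0)).updateCol
              (Sum.inl i₀) (fun r =>
                Rᵀ.updateRow y (Function.update (Rᵀ y) (Sum.inr ()) 0) r (Sum.inr ())) =
              ((A.updateRow i₀ (Function.update (A i₀) y 0))ᵀ).submatrix id
                (Sum.elim id fun _ => i₀) := by
            ext x z
            rcases z with z | _
            · by_cases hx : x = y <;> by_cases hzz : z = i₀ <;>
                simp [Matrix.updateRow_apply, Matrix.updateCol_apply, Function.update_apply, hx, hzz, hR]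
            · by_cases hx : x = y <;>
                simp [Matrix.updateRow_apply, Matrix.updateCol_apply, Function.update_apply, hx, hR]
          rw [heq]
          exact (hSU.2 i₀ y hne).transpose.submatrix id _
    have := su_transpose hsu
    rwa [Matrix.transpose_transpose] at this
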